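/- Discrete l'Hospital monotonicity rule in the special case of vanishing at +∞ (nondecreasing version): if ρ is nondecreasing on [a+1,∞) (ρ(n) ≤ ρ(n+1) for all n ≥ a+1), then r is nondecreasing on [a,∞) (r(n−1) ≤ r(n) for all n ≥ a+1). -/

import Mathlib

open Filter

private lemma lhosp_helper
    (a : ℤ) (f g : ℤ → ℝ)
    (hg : ∀ n : ℤ, a ≤ n → g n ≠ 0)
    (hΔgpos : ∀ n : ℤ, a + 1 ≤ n → 0 < g n - g (n - 1))
    (hf0 : Tendsto f atTop (nhds 0))
    (hg0 : Tendsto g atTop (nhds 0))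
    (hρ : ∀ n : ℤ, a + 1 ≤ n →
      (f n - f (n - 1)) / (g n - g (n - 1)) ≤ (f (n + 1) - f n) / (g (n + 1) - g n)) :
    ∀ n : ℤ, a + 1 ≤ n → f (n - 1) / g (n - 1) ≤ f n / g n := by
  -- monotonicity of ρ
  have hmono : ∀ k : ℤ, a + 1 ≤ k → ∀ m : ℤ, k ≤ m →
      (f k - f (k - 1)) / (g k - g (k - 1)) ≤ (f m - f (m - 1)) / (g m - g (m - 1)) := by
    intro k hk
    refine Int.le_induction (le_refl _) ?_
    intro m hm ih
    have h1 : a + 1 ≤ m := le_trans hk hm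
    have h2 := hρ m h1
    simp only [add_sub_cancel_right] at h2 ⊢
    exact le_trans ih h2
  -- g is negative on [a, ∞)
  have gneg : ∀ n : ℤ, a ≤ n → g n < 0 := by
    intro n hn
    have hle : ∀ N : ℤ, n ≤ N → g n ≤ g N := by
      refine Int.le_induction (le_refl _) ?_
      intro N hN ih
      have h1 : a + 1 ≤ N + 1 := by omega
      have h2 := hΔgpos (N + 1) h1
      simp only [add_sub_cancel_right] at h2
      linarith
    have hle0 : g n ≤ 0 :=
      ge_of_tendsto hg0 (Filter.eventually_atTop.mpr ⟨n, hle⟩)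
    exact lt_of_le_of_ne hle0 (hg n hn)
  -- key estimate: f n ≤ ρ(n+1) * g n for n ≥ a
  have key : ∀ n : ℤ, a ≤ n →
      f n ≤ ((f (n + 1) - f n) / (g (n + 1) - g n)) * g n := by
    intro n hn
    set c := (f (n + 1) - f n) / (g (n + 1) - g n) with hc
    have hsum : ∀ N : ℤ, n ≤ N → c * (g N - g n) ≤ f N - f n := by
      refine Int.le_induction (by simp) ?_
      intro N hN ih
      have h1 : a + 1 ≤ N + 1 := by omega
      have hgp := hΔgpos (N + 1) h1
      simp only [add_sub_cancel_right] at hgp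
      have hcle : c ≤ (f (N + 1) - f N) / (g (N + 1) - g N) := by
        have h3 := hmono (n + 1) (by omega) (N + 1) (by omega)
        simp only [add_sub_cancel_right] at h3
        exact le_trans (le_of_eq hc) h3
      have hstep : c * (g (N + 1) - g N) ≤ f (N + 1) - f N :=
        (le_div_iff₀ hgp).mp hcle
      nlinarith [hstep, ih]
    have t1 : Tendsto (fun N : ℤ => c * (g N - g n)) atTop (nhds (c * (0 - g n))) :=
      ((hg0.sub tendsto_const_nhds).const_mul c)
    have t2 : Tendsto (fun N : ℤ => f N - f n) atTop (nhds (0 - f n)) :=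
      hf0.sub tendsto_const_nhds
    have h4 := le_of_tendsto_of_tendsto t1 t2 (Filter.eventually_atTop.mpr ⟨n, hsum⟩)
    nlinarith [h4]
  -- conclude
  intro n hn
  have hgn : g n < 0 := gneg n (by omega)
  have hgn1 : g (n - 1) < 0 := gneg (n - 1) (by omega)
  have hd : 0 < g n - g (n - 1) := hΔgpos n hn
  -- f n ≤ ρ(n) * g n
  have hk : f n ≤ ((f n - f (n - 1)) / (g n - g (n - 1))) * g n := by
    have h1 := key n (by omega)
    have h2 := hρ n hn
    nlinarith [h1, h2, hgn]
  -- turn into cross-multiplied inequality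
  have hcross : f (n - 1) * g n ≤ f n * g (n - 1) := by
    have h3 : ((f n - f (n - 1)) / (g n - g (n - 1))) * (g n - g (n - 1))
        = f n - f (n - 1) := div_mul_cancel₀ _ (ne_of_gt hd)
    nlinarith [hk, h3, hd, hgn]
  have hP : 0 < g n * g (n - 1) := mul_pos_of_neg_of_neg hgn hgn1
  have e1 : f (n - 1) / g (n - 1) = (f (n - 1) * g n) / (g n * g (n - 1)) := by
    rw [div_eq_div_iff (hg (n - 1) (by omega)) (ne_of_gt hP)]
    ring
  have e2 : f n / g n = (f n * g (n - 1)) / (g n * g (n - 1)) := by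
    rw [div_eq_div_iff (hg n (by omega)) (ne_of_gt hP)]
    ring
  rw [e1, e2]
  gcongr

/-- Discrete l'Hospital monotonicity rule in the special case of vanishing
at +∞, nondecreasing version. -/
theorem discrete_lhospital_vanishing_at_infty_nondecreasing
    (a : ℤ) (f g : ℤ → ℝ)
    (hg : ∀ n : ℤ, a ≤ n → g n ≠ 0)
    (hgsign : ∀ n m : ℤ, a ≤ n → a ≤ m → 0 < g n * g m)
    (hΔg : ∀ n : ℤ, a + 1 ≤ n → g n - g (n - 1) ≠ 0)
    (hΔgsign : ∀ n m : ℤ, a + 1 ≤ n → a + 1 ≤ m →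
      0 < (g n - g (n - 1)) * (g m - g (m - 1)))
    (hf0 : Tendsto f atTop (nhds 0))
    (hg0 : Tendsto g atTop (nhds 0))
    (hρ : ∀ n : ℤ, a + 1 ≤ n →
      (f n - f (n - 1)) / (g n - g (n - 1)) ≤ (f (n + 1) - f n) / (g (n + 1) - g n)) :
    ∀ n : ℤ, a + 1 ≤ n → f (n - 1) / g (n - 1) ≤ f n / g n := by
  rcases lt_or_gt_of_ne (hΔg (a + 1) (le_refl _)) with hneg | hpos
  · -- Δg < 0 everywhere: apply helper to (-f, -g)
    have hΔgpos : ∀ n : ℤ, a + 1 ≤ n → 0 < (-g) n - (-g) (n - 1) := by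
      intro n hn
      have h1 := hΔgsign (a + 1) n (le_refl _) hn
      simp only [Pi.neg_apply]
      nlinarith [h1, hneg]
    have hg' : ∀ n : ℤ, a ≤ n → (-g) n ≠ 0 := by
      intro n hn
      simp only [Pi.neg_apply, ne_eq, neg_eq_zero]
      exact hg n hn
    have hf0' : Tendsto (-f) atTop (nhds 0) := by
      have := hf0.neg; rw [neg_zero] at this; exact this
    have hg0' : Tendsto (-g) atTop (nhds 0) := by
      have := hg0.neg; rw [neg_zero] at this; exact this
    have hρ' : ∀ n : ℤ, a + 1 ≤ n →
        ((-f) n - (-f) (n - 1)) / ((-g) n - (-g) (n - 1)) ≤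
          ((-f) (n + 1) - (-f) n) / ((-g) (n + 1) - (-g) n) := by
      intro n hn
      have h2 := hρ n hn
      simp only [Pi.neg_apply]
      rw [show -f n - -f (n - 1) = -(f n - f (n - 1)) by ring,
        show -g n - -g (n - 1) = -(g n - g (n - 1)) by ring,
        show -f (n + 1) - -f n = -(f (n + 1) - f n) by ring,
        show -g (n + 1) - -g n = -(g (n + 1) - g n) by ring,
        neg_div_neg_eq, neg_div_neg_eq]
      exact h2
    intro n hn
    have h3 := lhosp_helper a (-f) (-g) hg' hΔgpos hf0' hg0' hρ' n hn
    simp only [Pi.neg_apply, neg_div_neg_eq] at h3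
    exact h3
  · -- Δg > 0 everywhere: apply helper directly
    have hΔgpos : ∀ n : ℤ, a + 1 ≤ n → 0 < g n - g (n - 1) := by
      intro n hn
      have h1 := hΔgsign (a + 1) n (le_refl _) hn
      nlinarith [h1, hpos]
    exact lhosp_helper a f g hg hΔgpos hf0 hg0 hρ
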